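/- If f = Σ_{i=0}^{m−1} dⁱvᵢ where each vᵢ is a Schwartz solenoidal symmetric (m−i)-tensor field (δvᵢ = 0), then the transversal Radon transform of f vanishes: 𝒯ᵐ f(ω, p) = ∫_{H_{ω,p}} ⟨f(x), ω^{⊙m}⟩ dx = 0 for all unit vectors ω and p ∈ ℝ. -/

import Mathlib

open MeasureTheory
open scoped RealInnerProductSpace
noncomputable section

abbrev E (n : ℕ) := EuclideanSpace ℝ (Fin n)

/-- Tensor field of order `m` on ℝⁿ, given by its components. -/
abbrev TF (n m : ℕ) := E n → (Fin m → Fin n) → ℝ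

/-- Partial derivative in the `i`-th coordinate direction. -/
def pd {n : ℕ} (i : Fin n) (g : E n → ℝ) (x : E n) : ℝ :=
  fderiv ℝ g x (EuclideanSpace.single i 1)

/-- All components of the tensor field are Schwartz functions. -/
def IsSchwartzTF {n m : ℕ} (f : TF n m) : Prop :=
  ∀ idx, ∃ g : SchwartzMap (E n) ℝ, (fun x => f x idx) = ⇑g

/-- The tensor field is symmetric. -/
def IsSymTF {n m : ℕ} (f : TF n m) : Prop :=
  ∀ (x : E n) (σ : Equiv.Perm (Fin m)) (idx : Fin m → Fin n), f x (idx ∘ σ) = f x idx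

/-- Divergence δ of a tensor field (contraction of the derivative in the last index). -/
def div' {n m : ℕ} : TF n m → TF n (m - 1) :=
  match m with
  | 0 => fun _ => fun _ _ => 0
  | _ + 1 => fun u x idx => ∑ i : Fin n, pd i (fun y => u y (Fin.snoc idx i)) x

/-- Iterated divergence δ^k. -/
def divIter {n m : ℕ} : (k : ℕ) → TF n m → TF n (m - k)
  | 0, u => u
  | k + 1, u => div' (divIter k u)

/-- Symmetrization of an `m`-tensor (average over permutations of the indices). -/
def symz {n m : ℕ} (T : (Fin m → Fin n) → ℝ) : (Fin m → Fin n) → ℝ :=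
  fun idx => (m.factorial : ℝ)⁻¹ * ∑ σ : Equiv.Perm (Fin m), T (idx ∘ σ)

/-- Symmetrized derivative (inner differentiation) d. -/
def dsym {n m : ℕ} (v : TF n m) : TF n (m + 1) :=
  fun x => symz (fun idx => pd (idx (Fin.last m)) (fun y => v y (idx ∘ Fin.castSucc)) x)

/-- Iterated symmetrized derivative d^k. -/
def dIter {n m : ℕ} : (k : ℕ) → TF n m → TF n (m + k)
  | 0, v => v
  | k + 1, v => dsym (dIter k v)

/-- Componentwise Laplacian. -/
def lap {n m : ℕ} (u : TF n m) : TF n m :=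
  fun x idx => ∑ i : Fin n, pd i (fun y => pd i (fun z => u z idx) y) x

/-- Full contraction of an `m`-tensor field with a family of `m` vectors
(equivalently, with the symmetric product of those vectors when the field is symmetric). -/
def contr {n m : ℕ} (f : TF n m) (v : Fin m → E n) (x : E n) : ℝ :=
  ∑ idx : Fin m → Fin n, f x idx * ∏ j, v j (idx j)

/-- Contraction with a vector `w` in the last index. -/
def jv {n m : ℕ} (w : E n) : TF n m → TF n (m - 1) :=
  match m with
  | 0 => fun _ => fun _ _ => 0
  | _ + 1 => fun u x idx => ∑ i : Fin n, w i * u x (Fin.snoc idx i)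

/-- Iterated contraction with `w` in the last `k` indices. -/
def jvIter {n m : ℕ} (w : E n) : (k : ℕ) → TF n m → TF n (m - k)
  | 0, u => u
  | k + 1, u => jv w (jvIter w k u)

/-- Integral of a scalar function over the hyperplane `{x : ⟪x, ω⟫ = p}`. -/
def hypInt {n : ℕ} (h : E n → ℝ) (ω : E n) (p : ℝ) : ℝ :=
  ∫ y : ((ℝ ∙ ω)ᗮ : Submodule ℝ (E n)), h (p • ω + (y : E n))

/-- The transversal Radon transform 𝒯^m of a symmetric m-tensor field. -/
def TRT {n m : ℕ} (g : TF n m) (ω : E n) (p : ℝ) : ℝ :=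
  hypInt (contr g (fun _ => ω)) ω p

section Helpers
variable {n : ℕ}

def SchwartzMap.pderivCLM (_𝕜 : Type) (w : E n) (g : SchwartzMap (E n) ℝ) : SchwartzMap (E n) ℝ :=
  LineDeriv.lineDerivOp w g

lemma SchwartzMap.pderivCLM_apply (𝕜 : Type) (w : E n) (g : SchwartzMap (E n) ℝ) (x : E n) :
    SchwartzMap.pderivCLM 𝕜 w g x = fderiv ℝ g x w := rfl

lemma schwartz_sum_apply {ι : Type*} (s : Finset ι) (f : ι → SchwartzMap (E n) ℝ) (x : E n) :
    (∑ i ∈ s, f i) x = ∑ i ∈ s, f i x := by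
  have h := map_sum (FunLike.coeAddMonoidHom (SchwartzMap (E n) ℝ) (E n) ℝ) f s
  have h2 : ⇑(∑ i ∈ s, f i) = ∑ i ∈ s, ⇑(f i) := h
  rw [h2, Finset.sum_apply]

/-- contraction of a Schwartz tensor field is Schwartz -/
lemma isSchwartz_contr {m : ℕ} {u : TF n m} (hu : IsSchwartzTF u) (v : Fin m → E n) :
    ∃ g : SchwartzMap (E n) ℝ, contr u v = ⇑g := by
  choose G hG using hu
  refine ⟨∑ idx : Fin m → Fin n, (∏ j, v j (idx j)) • G idx, ?_⟩
  funext x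
  rw [schwartz_sum_apply]
  simp only [SchwartzMap.smul_apply, contr, smul_eq_mul]
  refine Finset.sum_congr rfl fun idx _ => ?_
  rw [← congrFun (hG idx) x]; ring

/-- pd of a Schwartz function, as a Schwartz function -/
lemma pd_schwartz (i : Fin n) (g : SchwartzMap (E n) ℝ) (x : E n) :
    pd i (⇑g) x = SchwartzMap.pderivCLM ℝ (EuclideanSpace.single i 1) g x := by
  rw [SchwartzMap.pderivCLM_apply]; rfl

lemma isSchwartz_dsym {m : ℕ} {u : TF n m} (hu : IsSchwartzTF u) : IsSchwartzTF (dsym u) := by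
  choose G hG using hu
  intro idx
  refine ⟨((m+1).factorial : ℝ)⁻¹ • ∑ σ : Equiv.Perm (Fin (m+1)),
      SchwartzMap.pderivCLM ℝ (EuclideanSpace.single ((idx ∘ σ) (Fin.last m)) 1)
        (G ((idx ∘ σ) ∘ Fin.castSucc)), ?_⟩
  funext x
  rw [SchwartzMap.smul_apply, schwartz_sum_apply]
  simp only [dsym, symz, smul_eq_mul]
  congr 1
  refine Finset.sum_congr rfl fun σ _ => ?_
  rw [← pd_schwartz, ← hG]

lemma sum_symz_mul {m : ℕ} (T c : (Fin m → Fin n) → ℝ)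
    (hc : ∀ (σ : Equiv.Perm (Fin m)) (idx : Fin m → Fin n), c (idx ∘ σ) = c idx) :
    ∑ idx : Fin m → Fin n, symz T idx * c idx = ∑ idx : Fin m → Fin n, T idx * c idx := by
  simp only [symz]
  have key : ∀ σ : Equiv.Perm (Fin m),
      ∑ idx : Fin m → Fin n, T (idx ∘ σ) * c idx = ∑ idx : Fin m → Fin n, T idx * c idx := by
    intro σ
    apply Fintype.sum_equiv (Equiv.arrowCongr σ.symm (Equiv.refl (Fin n)))
    intro idx
    have h1 : (Equiv.arrowCongr σ.symm (Equiv.refl (Fin n))) idx = idx ∘ σ := by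
      funext j; simp [Equiv.arrowCongr]
    rw [h1]
    have h2 : (idx ∘ σ) ∘ (σ.symm : Equiv.Perm (Fin m)) = idx := by
      funext j; simp
    rw [← hc σ.symm (idx ∘ σ), h2]
  calc ∑ idx : Fin m → Fin n, ((m.factorial : ℝ)⁻¹ * ∑ σ : Equiv.Perm (Fin m), T (idx ∘ σ)) * c idx
      = (m.factorial : ℝ)⁻¹ * ∑ σ : Equiv.Perm (Fin m),
          ∑ idx : Fin m → Fin n, T (idx ∘ σ) * c idx := by
        have step : ∀ idx : Fin m → Fin n,
            ((m.factorial : ℝ)⁻¹ * ∑ σ : Equiv.Perm (Fin m), T (idx ∘ σ)) * c idx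
              = (m.factorial : ℝ)⁻¹ * ∑ σ : Equiv.Perm (Fin m), T (idx ∘ σ) * c idx := by
          intro idx; rw [mul_assoc, Finset.sum_mul]
        rw [Finset.sum_congr rfl fun idx _ => step idx, ← Finset.mul_sum, Finset.sum_comm]
    _ = (m.factorial : ℝ)⁻¹ * ∑ _σ : Equiv.Perm (Fin m),
          ∑ idx : Fin m → Fin n, T idx * c idx := by
        rw [Finset.sum_congr rfl fun σ _ => key σ]
    _ = ∑ idx : Fin m → Fin n, T idx * c idx := by
        rw [Finset.sum_const, Finset.card_univ, Fintype.card_perm, Fintype.card_fin, nsmul_eq_mul, ← mul_assoc,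
          inv_mul_cancel₀ (by exact_mod_cast Nat.factorial_ne_zero m), one_mul]

lemma sum_snoc_split {m : ℕ} (F : (Fin (m+1) → Fin n) → ℝ) :
    ∑ idx : Fin (m+1) → Fin n, F idx
      = ∑ i : Fin n, ∑ idx : Fin m → Fin n, F (Fin.snoc idx i) := by
  rw [← (Fin.snocEquiv (fun _ => Fin n)).sum_comp F]
  rw [Fintype.sum_prod_type]
  rfl

lemma prod_snoc_omega {m : ℕ} (ω : E n) (idx : Fin m → Fin n) (i : Fin n) :
    ∏ j : Fin (m+1), ω ((Fin.snoc idx i : Fin (m+1) → Fin n) j)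
      = (∏ j : Fin m, ω (idx j)) * ω i := by
  rw [Fin.prod_univ_castSucc, Fin.snoc_last]
  congr 1
  exact Finset.prod_congr rfl fun j _ => by rw [Fin.snoc_castSucc]

lemma fderiv_sum_mul {ι : Type*} [Fintype ι] (G : ι → SchwartzMap (E n) ℝ) (c : ι → ℝ)
    (x w : E n) :
    fderiv ℝ (fun x => ∑ i : ι, G i x * c i) x w = ∑ i : ι, fderiv ℝ (⇑(G i)) x w * c i := by
  have h : HasFDerivAt (fun x => ∑ i : ι, G i x * c i)
      (∑ i : ι, c i • fderiv ℝ (⇑(G i)) x) x := by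
    apply HasFDerivAt.fun_sum
    intro i _
    exact ((G i).differentiableAt.hasFDerivAt).mul_const (c i)
  rw [h.fderiv, ContinuousLinearMap.sum_apply]
  refine Finset.sum_congr rfl fun i _ => ?_
  rw [ContinuousLinearMap.smul_apply]; simp [mul_comm]

/-- ω as a sum of basis vectors, and fderiv applied to it -/
lemma fderiv_apply_eq_sum_pd (g : SchwartzMap (E n) ℝ) (x ω : E n) :
    fderiv ℝ (⇑g) x ω = ∑ i : Fin n, ω i * pd i (⇑g) x := by
  have hω : ω = ∑ i : Fin n, ω i • EuclideanSpace.single i 1 := by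
    apply PiLp.ext
    intro j
    have : (∑ i : Fin n, ω i • EuclideanSpace.single i 1 : E n) j
        = ∑ i : Fin n, (ω i • EuclideanSpace.single (𝕜 := ℝ) i (1:ℝ)) j := by
      rw [WithLp.ofLp_sum, Finset.sum_apply]
    rw [this]
    simp [EuclideanSpace.single_apply]
  conv_lhs => rw [hω]
  rw [map_sum]
  refine Finset.sum_congr rfl fun i _ => ?_
  rw [ContinuousLinearMap.map_smul]
  rfl

lemma prod_comp_perm {m : ℕ} (ω : E n) (idx : Fin m → Fin n) (σ : Equiv.Perm (Fin m)) :
    (∏ j : Fin m, ω ((idx ∘ σ) j)) = ∏ j : Fin m, ω (idx j) :=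
  Equiv.prod_comp σ (fun j => ω (idx j))

lemma contr_dsym {m : ℕ} (u : TF n m) (hu : IsSchwartzTF u) (ω : E n) (x : E n) :
    contr (dsym u) (fun _ => ω) x = fderiv ℝ (contr u (fun _ => ω)) x ω := by
  choose G hG using hu
  have hrep : contr u (fun _ => ω) = fun x => ∑ idx : Fin m → Fin n, G idx x * ∏ j, ω (idx j) := by
    funext x
    exact Finset.sum_congr rfl fun idx _ => by rw [← congrFun (hG idx) x]
  rw [hrep, fderiv_sum_mul]
  -- RHS now: ∑ idx, fderiv (G idx) x ω * ∏ j, ω (idx j)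
  have hLHS : contr (dsym u) (fun _ => ω) x
      = ∑ i : Fin n, ∑ idx : Fin m → Fin n,
          pd i (⇑(G idx)) x * ((∏ j, ω (idx j)) * ω i) := by
    have h0 : contr (dsym u) (fun _ => ω) x
        = ∑ idx : Fin (m+1) → Fin n,
            symz (fun J => pd (J (Fin.last m)) (fun y => u y (J ∘ Fin.castSucc)) x) idx
              * ∏ j, ω (idx j) := rfl
    rw [h0, sum_symz_mul _ _ (fun σ idx => prod_comp_perm ω idx σ), sum_snoc_split]
    refine Finset.sum_congr rfl fun i _ => Finset.sum_congr rfl fun idx _ => ?_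
    rw [prod_snoc_omega]
    congr 1
    have h1 : (Fin.snoc idx i : Fin (m+1) → Fin n) (Fin.last m) = i := by rw [Fin.snoc_last]
    have h2 : (Fin.snoc idx i : Fin (m+1) → Fin n) ∘ Fin.castSucc = idx :=
      Fin.snoc_comp_castSucc
    rw [h1, h2, hG idx]
  rw [hLHS, Finset.sum_comm]
  refine Finset.sum_congr rfl fun idx _ => ?_
  rw [fderiv_apply_eq_sum_pd, Finset.sum_mul]
  exact Finset.sum_congr rfl fun i _ => by ring

lemma contr_div'_eqs {m : ℕ} (u : TF n (m+1)) (hu : IsSchwartzTF u) (ω : E n) :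
    ∃ V : Fin n → SchwartzMap (E n) ℝ,
      (∀ x, contr u (fun _ => ω) x = ∑ i : Fin n, ω i * V i x) ∧
      (∀ x, contr (div' u) (fun _ => ω) x
          = ∑ i : Fin n, fderiv ℝ (⇑(V i)) x (EuclideanSpace.single i 1)) ∧
      (∀ x w, fderiv ℝ (contr u (fun _ => ω)) x w
          = ∑ i : Fin n, ω i * fderiv ℝ (⇑(V i)) x w) := by
  choose G hG using hu
  set V : Fin n → SchwartzMap (E n) ℝ :=
    fun i => ∑ idx : Fin m → Fin n, (∏ j, ω (idx j)) • G (Fin.snoc idx i) with hV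
  have hVcoe : ∀ i, ⇑(V i) = fun x => ∑ idx : Fin m → Fin n,
      G (Fin.snoc idx i) x * ∏ j, ω (idx j) := by
    intro i; funext x
    rw [hV, schwartz_sum_apply]
    exact Finset.sum_congr rfl fun idx _ => by rw [SchwartzMap.smul_apply]; simp [mul_comm]
  have h1 : ∀ x, contr u (fun _ => ω) x = ∑ i : Fin n, ω i * V i x := by
    intro x
    have h0 : contr u (fun _ => ω) x
        = ∑ idx : Fin (m+1) → Fin n, u x idx * ∏ j, ω (idx j) := rfl
    rw [h0, sum_snoc_split (fun idx => u x idx * ∏ j, ω (idx j))]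
    refine Finset.sum_congr rfl fun i _ => ?_
    rw [congrFun (hVcoe i) x, Finset.mul_sum]
    refine Finset.sum_congr rfl fun idx _ => ?_
    rw [prod_snoc_omega, ← congrFun (hG (Fin.snoc idx i)) x]
    ring
  refine ⟨V, h1, ?_, ?_⟩
  · intro x
    have h0 : contr (div' u) (fun _ => ω) x
        = ∑ idx : Fin m → Fin n,
            (∑ i : Fin n, pd i (fun y => u y (Fin.snoc idx i)) x) * ∏ j, ω (idx j) := rfl
    rw [h0]
    have hswap : ∑ idx : Fin m → Fin n,
          (∑ i : Fin n, pd i (fun y => u y (Fin.snoc idx i)) x) * ∏ j, ω (idx j)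
        = ∑ i : Fin n, ∑ idx : Fin m → Fin n,
            pd i (fun y => u y (Fin.snoc idx i)) x * ∏ j, ω (idx j) := by
      rw [Finset.sum_comm]
      exact Finset.sum_congr rfl fun idx _ => by rw [Finset.sum_mul]
    rw [hswap]
    refine Finset.sum_congr rfl fun i _ => ?_
    rw [hVcoe i, fderiv_sum_mul (fun idx => G (Fin.snoc idx i)) (fun idx => ∏ j, ω (idx j))]
    refine Finset.sum_congr rfl fun idx _ => ?_
    congr 1
    rw [hG (Fin.snoc idx i)]
    rfl
  · intro x w
    have hfun : contr u (fun _ => ω) = fun x => ∑ i : Fin n, V i x * ω i := by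
      funext x; rw [h1 x]; exact Finset.sum_congr rfl fun i _ => by ring
    rw [hfun, fderiv_sum_mul V (fun i => ω i)]
    exact Finset.sum_congr rfl fun i _ => by ring

lemma schwartz_decay_bound (g : SchwartzMap (E n) ℝ) (k : ℕ) :
    ∃ C : ℝ, 0 ≤ C ∧ ∀ x : E n, (1 + ‖x‖)^k * |g x| ≤ C := by
  refine ⟨(2:ℝ)^k * ((Finset.Iic (k,0)).sup (schwartzSeminormFamily ℝ (E n) ℝ)) g, ?_, ?_⟩
  · positivity
  · intro x
    have h := SchwartzMap.one_add_le_sup_seminorm_apply (𝕜 := ℝ) (m := (k,0)) (k := k) (n := 0)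
      le_rfl le_rfl g x
    simp only [norm_iteratedFDeriv_zero, Real.norm_eq_abs] at h; exact h

lemma one_add_norm_ineq (a y : E n) : 1 + ‖y‖ ≤ (1 + ‖a‖) * (1 + ‖a + y‖) := by
  have h : ‖y‖ ≤ ‖a‖ + ‖a + y‖ := by
    have := norm_add_le (-a) (a + y)
    simpa [neg_add_cancel_left] using this
  nlinarith [norm_nonneg a, norm_nonneg (a + y)]

lemma schwartz_decay_bound' (g : SchwartzMap (E n) ℝ) (k : ℕ) :
    ∃ C : ℝ, 0 ≤ C ∧ ∀ a y : E n, (1 + ‖y‖)^k * |g (a + y)| ≤ C * (1 + ‖a‖)^k := by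
  obtain ⟨C, hC0, hC⟩ := schwartz_decay_bound g k
  refine ⟨C, hC0, fun a y => ?_⟩
  have h1 : (1 + ‖y‖)^k ≤ (1 + ‖a‖)^k * (1 + ‖a + y‖)^k := by
    rw [← mul_pow]
    exact pow_le_pow_left₀ (by positivity) (one_add_norm_ineq a y) k
  calc (1 + ‖y‖)^k * |g (a + y)|
      ≤ ((1 + ‖a‖)^k * (1 + ‖a + y‖)^k) * |g (a + y)| :=
        mul_le_mul_of_nonneg_right h1 (abs_nonneg _)
    _ = (1 + ‖a‖)^k * ((1 + ‖a + y‖)^k * |g (a + y)|) := by ring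
    _ ≤ (1 + ‖a‖)^k * C := mul_le_mul_of_nonneg_left (hC _) (by positivity)
    _ = C * (1 + ‖a‖)^k := by ring

section Analytic
variable {n : ℕ} (ω : E n) (hω : ‖ω‖ = 1)

lemma n_pos (hω : ‖ω‖ = 1) : 0 < n := by
  rcases Nat.eq_zero_or_pos n with h | h
  · subst h
    have : ω = 0 := Subsingleton.elim _ _
    rw [this] at hω; simp at hω
  · exact h

lemma omega_ne_zero (hω : ‖ω‖ = 1) : ω ≠ 0 := by
  intro h; rw [h] at hω; simp at hω

lemma integrable_W (hω : ‖ω‖ = 1) :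
    Integrable (fun y : ((ℝ ∙ ω)ᗮ : Submodule ℝ (E n)) => ((1 + ‖y‖)^n)⁻¹) := by
  have hrank : (Module.finrank ℝ ((ℝ ∙ ω)ᗮ : Submodule ℝ (E n)) : ℝ) < (n : ℝ) := by
    have h1 : Module.finrank ℝ (ℝ ∙ ω : Submodule ℝ (E n)) = 1 :=
      finrank_span_singleton (omega_ne_zero ω hω)
    have h2 := Submodule.finrank_add_finrank_orthogonal (K := (ℝ ∙ ω : Submodule ℝ (E n)))
    have h3 : Module.finrank ℝ (E n) = n := finrank_euclideanSpace_fin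
    have h4 : Module.finrank ℝ ((ℝ ∙ ω)ᗮ : Submodule ℝ (E n)) = n - 1 := by omega
    rw [h4]
    have h5 := n_pos ω hω
    exact_mod_cast Nat.sub_lt h5 one_pos
  have h := integrable_one_add_norm (E := ((ℝ ∙ ω)ᗮ : Submodule ℝ (E n)))
    (μ := volume) (r := (n : ℝ)) hrank
  refine h.congr ?_
  filter_upwards with y
  rw [Real.rpow_neg (by positivity), Real.rpow_natCast]

lemma integrable_comp (hω : ‖ω‖ = 1) (g : SchwartzMap (E n) ℝ) (a : E n) :
    Integrable (fun y : ((ℝ ∙ ω)ᗮ : Submodule ℝ (E n)) => g (a + (y : E n))) := by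
  obtain ⟨C, hC0, hC⟩ := schwartz_decay_bound' g n
  apply Integrable.mono' ((integrable_W ω hω).const_mul (C * (1 + ‖a‖)^n))
  · exact (g.continuous.comp (continuous_const.add continuous_subtype_val)).aestronglyMeasurable
  · filter_upwards with y
    have h := hC a (y : E n)
    have hny : ‖(y : E n)‖ = ‖y‖ := rfl
    rw [hny] at h
    have hpos : (0:ℝ) < (1 + ‖y‖)^n := by positivity
    rw [Real.norm_eq_abs, ← div_eq_mul_inv, le_div_iff₀ hpos]
    linarith [h, mul_comm (|g (a + (y:E n))|) ((1 + ‖y‖)^n)]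

lemma hasDerivAt_hypInt (hω : ‖ω‖ = 1) (g : SchwartzMap (E n) ℝ) (c w : E n) (s₀ : ℝ) :
    HasDerivAt (fun s => ∫ y : ((ℝ ∙ ω)ᗮ : Submodule ℝ (E n)), g (c + s • w + (y : E n)))
      (∫ y : ((ℝ ∙ ω)ᗮ : Submodule ℝ (E n)),
        (SchwartzMap.pderivCLM ℝ w g) (c + s₀ • w + (y : E n))) s₀ := by
  set g' := SchwartzMap.pderivCLM ℝ w g with hg'
  obtain ⟨C, hC0, hC⟩ := schwartz_decay_bound' g' n
  set R := ‖c‖ + (|s₀| + 1) * ‖w‖ with hR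
  have key := hasDerivAt_integral_of_dominated_loc_of_deriv_le
    (μ := (volume : Measure ((ℝ ∙ ω)ᗮ : Submodule ℝ (E n))))
    (F := fun s (y : ((ℝ ∙ ω)ᗮ : Submodule ℝ (E n))) => g (c + s • w + (y : E n)))
    (F' := fun s (y : ((ℝ ∙ ω)ᗮ : Submodule ℝ (E n))) => g' (c + s • w + (y : E n)))
    (x₀ := s₀) (s := Metric.ball s₀ 1)
    (bound := fun y => (C * (1 + R)^n) * ((1 + ‖y‖)^n)⁻¹)
    (Metric.ball_mem_nhds s₀ one_pos)
    (by
      filter_upwards with s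
      exact (g.continuous.comp (continuous_const.add continuous_subtype_val)).aestronglyMeasurable)
    (integrable_comp ω hω g (c + s₀ • w))
    ((g'.continuous.comp (continuous_const.add continuous_subtype_val)).aestronglyMeasurable)
    (by
      filter_upwards with y
      intro s hs
      have habs : |s| ≤ |s₀| + 1 := by
        rw [Metric.mem_ball, Real.dist_eq] at hs
        have := abs_sub_abs_le_abs_sub s s₀
        linarith
      have hnorm : ‖c + s • w‖ ≤ R := by
        calc ‖c + s • w‖ ≤ ‖c‖ + ‖s • w‖ := norm_add_le _ _
          _ = ‖c‖ + |s| * ‖w‖ := by rw [norm_smul, Real.norm_eq_abs]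
          _ ≤ R := by
              rw [hR]
              have := norm_nonneg w
              nlinarith
      have h := hC (c + s • w) (y : E n)
      have hny : ‖(y : E n)‖ = ‖y‖ := rfl
      rw [hny] at h
      have hmono : (1 + ‖c + s • w‖)^n ≤ (1 + R)^n :=
        pow_le_pow_left₀ (by positivity) (by linarith) n
      have hpos : (0:ℝ) < (1 + ‖y‖)^n := by positivity
      rw [Real.norm_eq_abs, ← div_eq_mul_inv, le_div_iff₀ hpos]
      calc |g' (c + s • w + (y:E n))| * (1 + ‖y‖)^n
          = (1 + ‖y‖)^n * |g' (c + s • w + (y:E n))| := by ring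
        _ ≤ C * (1 + ‖c + s • w‖)^n := h
        _ ≤ C * (1 + R)^n := by nlinarith
    )
    (((integrable_W ω hω).const_mul (C * (1 + R)^n)))
    (by
      filter_upwards with y
      intro s _
      have hφ : HasDerivAt (fun s : ℝ => c + s • w + (y : E n)) w s := by
        simpa using (((hasDerivAt_id s).smul_const w).const_add c).add_const ((y : E n))
      have hg := (g.differentiableAt (x := c + s • w + (y : E n))).hasFDerivAt
      have := hg.comp_hasDerivAt s hφ
      rw [hg']
      exact this)
  exact key.2

lemma hypInt_translate (g : SchwartzMap (E n) ℝ) (c : E n)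
    (t : ((ℝ ∙ ω)ᗮ : Submodule ℝ (E n))) (s : ℝ) :
    ∫ y : ((ℝ ∙ ω)ᗮ : Submodule ℝ (E n)), g (c + s • (t : E n) + (y : E n))
      = ∫ y : ((ℝ ∙ ω)ᗮ : Submodule ℝ (E n)), g (c + (y : E n)) := by
  set G : ((ℝ ∙ ω)ᗮ : Submodule ℝ (E n)) → ℝ := fun z => g (c + (z : E n)) with hGdef
  have h2 : (fun y : ((ℝ ∙ ω)ᗮ : Submodule ℝ (E n)) => g (c + s • (t : E n) + (y : E n)))
      = fun y => G (s • t + y) := by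
    funext y
    show g (c + s • (t : E n) + (y : E n)) = g (c + ((s • t + y : ((ℝ ∙ ω)ᗮ : Submodule ℝ (E n))) : E n))
    congr 1
    push_cast
    rw [add_assoc]
  rw [h2]
  exact integral_add_left_eq_self G (s • t)

lemma integral_tangential_deriv_zero (hω : ‖ω‖ = 1) (g : SchwartzMap (E n) ℝ) (c : E n)
    (t : ((ℝ ∙ ω)ᗮ : Submodule ℝ (E n))) :
    ∫ y : ((ℝ ∙ ω)ᗮ : Submodule ℝ (E n)), fderiv ℝ (⇑g) (c + (y : E n)) (t : E n) = 0 := by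
  have h1 := hasDerivAt_hypInt ω hω g c (t : E n) 0
  have h2 : (fun s : ℝ => ∫ y : ((ℝ ∙ ω)ᗮ : Submodule ℝ (E n)), g (c + s • (t:E n) + (y : E n)))
      = fun _ => ∫ y : ((ℝ ∙ ω)ᗮ : Submodule ℝ (E n)), g (c + (y : E n)) :=
    funext fun s => hypInt_translate ω g c t s
  rw [h2] at h1
  have h3 := h1.unique (hasDerivAt_const (0:ℝ) _)
  have h4 : (fun y : ((ℝ ∙ ω)ᗮ : Submodule ℝ (E n)) =>
      (SchwartzMap.pderivCLM ℝ ((t : E n)) g) (c + (0:ℝ) • (t : E n) + (y : E n)))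
      = fun y : ((ℝ ∙ ω)ᗮ : Submodule ℝ (E n)) => fderiv ℝ (⇑g) (c + (y : E n)) (t : E n) := by
    funext y
    rw [SchwartzMap.pderivCLM_apply, zero_smul, add_zero]
  rw [h4] at h3
  exact h3

lemma inner_omega_coe_zero (y : ((ℝ ∙ ω)ᗮ : Submodule ℝ (E n))) : ⟪ω, (y : E n)⟫ = 0 :=
  Submodule.inner_right_of_mem_orthogonal (Submodule.mem_span_singleton_self ω) y.2

lemma norm_smul_add_sq (hω : ‖ω‖ = 1) (q : ℝ) (y : ((ℝ ∙ ω)ᗮ : Submodule ℝ (E n))) :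
    ‖q • ω + (y : E n)‖^2 = q^2 + ‖y‖^2 := by
  have h := norm_add_sq_real (q • ω) (y : E n)
  have hi : ⟪q • ω, (y : E n)⟫ = 0 := by
    rw [real_inner_smul_left, inner_omega_coe_zero, mul_zero]
  rw [hi] at h
  have hn : ‖q • ω‖ = |q| := by rw [norm_smul, Real.norm_eq_abs, hω, mul_one]
  have hny : ‖(y : E n)‖ = ‖y‖ := rfl
  rw [hn, hny, sq_abs] at h
  linarith

lemma hypInt_tendsto_zero (hω : ‖ω‖ = 1) (g : SchwartzMap (E n) ℝ) :
    Filter.Tendsto (fun q : ℝ => ∫ y : ((ℝ ∙ ω)ᗮ : Submodule ℝ (E n)), g (q • ω + (y : E n)))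
      Filter.atTop (nhds 0) := by
  obtain ⟨C, hC0, hC⟩ := schwartz_decay_bound g (n+1)
  set I := ∫ y : ((ℝ ∙ ω)ᗮ : Submodule ℝ (E n)), ((1 + ‖y‖)^n)⁻¹ with hI
  have hInn : 0 ≤ I := integral_nonneg fun y => by positivity
  have hbnd : ∀ q : ℝ, 0 ≤ q →
      ‖∫ y : ((ℝ ∙ ω)ᗮ : Submodule ℝ (E n)), g (q • ω + (y : E n))‖ ≤ (C * I) * (1 + q)⁻¹ := by
    intro q hq
    have hb : ∀ y : ((ℝ ∙ ω)ᗮ : Submodule ℝ (E n)),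
        ‖g (q • ω + (y : E n))‖ ≤ (C * (1 + q)⁻¹) * ((1 + ‖y‖)^n)⁻¹ := by
      intro y
      set z := q • ω + (y : E n) with hz
      have hsq := norm_smul_add_sq ω hω q y
      have hq' : q ≤ ‖z‖ := by nlinarith [norm_nonneg z, sq_nonneg (‖y‖ : ℝ)]
      have hy' : ‖y‖ ≤ ‖z‖ := by nlinarith [norm_nonneg z, norm_nonneg y, sq_nonneg q]
      have hkey : (1 + q) * (1 + ‖y‖)^n ≤ (1 + ‖z‖)^(n+1) := by
        rw [pow_succ]
        have hA : (1 + ‖y‖)^n ≤ (1 + ‖z‖)^n :=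
          pow_le_pow_left₀ (by positivity) (by linarith) n
        have hB : 1 + q ≤ 1 + ‖z‖ := by linarith
        calc (1 + q) * (1 + ‖y‖)^n ≤ (1 + ‖z‖) * (1 + ‖z‖)^n := by
              apply mul_le_mul hB hA (by positivity) (by positivity)
          _ = (1 + ‖z‖)^n * (1 + ‖z‖) := by ring
      have hpos : (0:ℝ) < (1 + q) * (1 + ‖y‖)^n := by positivity
      have h := hC z
      rw [Real.norm_eq_abs]
      rw [mul_assoc, ← mul_inv, ← div_eq_mul_inv, le_div_iff₀ hpos]
      calc |g z| * ((1 + q) * (1 + ‖y‖)^n) ≤ |g z| * (1 + ‖z‖)^(n+1) := by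
            apply mul_le_mul_of_nonneg_left hkey (abs_nonneg _)
        _ ≤ C := by rw [mul_comm]; exact h
    have := norm_integral_le_of_norm_le
      ((integrable_W ω hω).const_mul (C * (1 + q)⁻¹))
      (Filter.Eventually.of_forall hb)
    calc ‖∫ y : ((ℝ ∙ ω)ᗮ : Submodule ℝ (E n)), g (q • ω + (y : E n))‖
        ≤ ∫ y : ((ℝ ∙ ω)ᗮ : Submodule ℝ (E n)), (C * (1 + q)⁻¹) * ((1 + ‖y‖)^n)⁻¹ := this
      _ = (C * (1 + q)⁻¹) * I := by rw [integral_const_mul]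
      _ = (C * I) * (1 + q)⁻¹ := by ring
  have htend : Filter.Tendsto (fun q : ℝ => (C * I) * (1 + q)⁻¹) Filter.atTop (nhds 0) := by
    have h1 : Filter.Tendsto (fun q : ℝ => (1 + q)) Filter.atTop Filter.atTop :=
      Filter.tendsto_atTop_add_const_left _ 1 Filter.tendsto_id
    have h2 := (tendsto_inv_atTop_zero).comp h1
    have := h2.const_mul (C * I)
    simpa using this
  refine squeeze_zero_norm' ?_ htend
  filter_upwards [Filter.eventually_ge_atTop (0:ℝ)] with q hq
  exact hbnd q hq

end Analytic

lemma isSchwartz_dIter {n m : ℕ} (u : TF n m) (hu : IsSchwartzTF u) (k : ℕ) :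
    IsSchwartzTF (dIter k u) := by
  induction k with
  | zero => exact hu
  | succ k ih => exact isSchwartz_dsym ih

lemma hypInt_def {n : ℕ} (ω : E n) (h : E n → ℝ) (p : ℝ) :
    hypInt h ω p = ∫ y : ((ℝ ∙ ω)ᗮ : Submodule ℝ (E n)), h (p • ω + (y : E n)) := rfl

lemma main_zero {n : ℕ} (ω : E n) (hω : ‖ω‖ = 1) (M : ℕ) (hM : M ≠ 0) (u : TF n M)
    (hu : IsSchwartzTF u) (hdiv : div' u = fun _ _ => 0) (k : ℕ) (p : ℝ) :
    hypInt (contr (dIter k u) (fun _ => ω)) ω p = 0 := by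
  obtain ⟨r, rfl⟩ := Nat.exists_eq_succ_of_ne_zero hM
  induction k generalizing p with
  | zero =>
    obtain ⟨g, hg⟩ := isSchwartz_contr hu (fun _ => ω)
    obtain ⟨V, hV1, hV2, hV3⟩ := contr_div'_eqs u hu ω
    -- tangential directions
    set t : Fin n → ((ℝ ∙ ω)ᗮ : Submodule ℝ (E n)) := fun i =>
      ⟨EuclideanSpace.single i 1 - ω i • ω, by
        rw [Submodule.mem_orthogonal_singleton_iff_inner_right]
        have h1 : ⟪ω, EuclideanSpace.single i (1:ℝ)⟫ = ω i := by
          rw [EuclideanSpace.inner_single_right]; simp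
        have h2 : ⟪ω, ω⟫ = 1 := by
          rw [real_inner_self_eq_norm_mul_norm, hω]; ring
        rw [inner_sub_right, real_inner_smul_right, h1, h2]; ring⟩ with ht
    have hcoe : ∀ i : Fin n, ((t i : E n)) + ω i • ω = EuclideanSpace.single i 1 := by
      intro i; rw [ht]; simp
    -- pointwise: fderiv g · ω = - ∑ tangential derivatives
    have hpt : ∀ z : E n, fderiv ℝ (⇑g) z ω
        = - ∑ i : Fin n, fderiv ℝ (⇑(V i)) z ((t i : E n)) := by
      intro z
      have hdz : (0:ℝ) = ∑ i : Fin n, fderiv ℝ (⇑(V i)) z (EuclideanSpace.single i 1) := by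
        rw [← hV2 z, hdiv]
        simp [contr]
      have hsplit : ∀ i : Fin n, fderiv ℝ (⇑(V i)) z (EuclideanSpace.single i 1)
          = fderiv ℝ (⇑(V i)) z ((t i : E n)) + ω i * fderiv ℝ (⇑(V i)) z ω := by
        intro i
        rw [← hcoe i, ContinuousLinearMap.map_add, ContinuousLinearMap.map_smul,
          smul_eq_mul]
      have hsum : (0:ℝ) = (∑ i : Fin n, fderiv ℝ (⇑(V i)) z ((t i : E n)))
          + ∑ i : Fin n, ω i * fderiv ℝ (⇑(V i)) z ω := by
        rw [hdz, Finset.sum_congr rfl fun i _ => hsplit i, Finset.sum_add_distrib]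
      have hgf : fderiv ℝ (⇑g) z ω = ∑ i : Fin n, ω i * fderiv ℝ (⇑(V i)) z ω := by
        rw [← hg]; exact hV3 z ω
      rw [hgf]; linarith
    -- Φ has zero derivative everywhere
    have hders : ∀ q : ℝ, HasDerivAt
        (fun s : ℝ => ∫ y : ((ℝ ∙ ω)ᗮ : Submodule ℝ (E n)), g (s • ω + (y : E n))) 0 q := by
      intro q
      have h1 := hasDerivAt_hypInt ω hω g 0 ω q
      have e1 : (fun s : ℝ => ∫ y : ((ℝ ∙ ω)ᗮ : Submodule ℝ (E n)), g ((0:E n) + s • ω + (y : E n)))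
          = fun s : ℝ => ∫ y : ((ℝ ∙ ω)ᗮ : Submodule ℝ (E n)), g (s • ω + (y : E n)) := by
        funext s
        congr 1
        funext y
        rw [zero_add]
      have hval : (∫ y : ((ℝ ∙ ω)ᗮ : Submodule ℝ (E n)),
          (SchwartzMap.pderivCLM ℝ ω g) ((0:E n) + q • ω + (y : E n))) = 0 := by
        have e2 : (fun y : ((ℝ ∙ ω)ᗮ : Submodule ℝ (E n)) =>
            (SchwartzMap.pderivCLM ℝ ω g) ((0:E n) + q • ω + (y : E n)))
            = fun y : ((ℝ ∙ ω)ᗮ : Submodule ℝ (E n)) =>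
                - ∑ i : Fin n, (SchwartzMap.pderivCLM ℝ ((t i : E n)) (V i)) (q • ω + (y : E n)) := by
          funext y
          rw [SchwartzMap.pderivCLM_apply, zero_add, hpt]
          congr 1
        rw [e2, integral_neg, neg_eq_zero]
        rw [integral_finset_sum _ (fun i _ =>
          integrable_comp ω hω (SchwartzMap.pderivCLM ℝ ((t i : E n)) (V i)) (q • ω))]
        refine Finset.sum_eq_zero fun i _ => ?_
        have e3 : (fun y : ((ℝ ∙ ω)ᗮ : Submodule ℝ (E n)) =>
            (SchwartzMap.pderivCLM ℝ ((t i : E n)) (V i)) (q • ω + (y : E n)))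
            = fun y : ((ℝ ∙ ω)ᗮ : Submodule ℝ (E n)) =>
                fderiv ℝ (⇑(V i)) (q • ω + (y : E n)) ((t i : E n)) := by
          funext y
          rw [SchwartzMap.pderivCLM_apply]
        rw [e3]
        exact integral_tangential_deriv_zero ω hω (V i) (q • ω) (t i)
      rw [e1, hval] at h1
      exact h1
    set Φ : ℝ → ℝ := fun q => ∫ y : ((ℝ ∙ ω)ᗮ : Submodule ℝ (E n)), g (q • ω + (y : E n)) with hΦ
    have hconst : ∀ a b : ℝ, Φ a = Φ b :=
      fun a b => is_const_of_deriv_eq_zero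
        (fun q => (hders q).differentiableAt) (fun q => (hders q).deriv) a b
    have htend0 : Filter.Tendsto Φ Filter.atTop (nhds 0) := hypInt_tendsto_zero ω hω g
    have htendc : Filter.Tendsto Φ Filter.atTop (nhds (Φ p)) := by
      have : Φ = fun _ => Φ p := funext fun q => hconst q p
      rw [this]
      exact tendsto_const_nhds
    have hΦp : Φ p = 0 := tendsto_nhds_unique htendc htend0
    rw [hypInt_def]
    have e4 : (fun y : ((ℝ ∙ ω)ᗮ : Submodule ℝ (E n)) =>
        contr (dIter 0 u) (fun _ => ω) (p • ω + (y : E n)))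
        = fun y : ((ℝ ∙ ω)ᗮ : Submodule ℝ (E n)) => g (p • ω + (y : E n)) := by
      funext y
      exact congrFun hg _
    rw [e4]
    exact hΦp
  | succ k ih =>
    have hSk : IsSchwartzTF (dIter k u) := isSchwartz_dIter u hu k
    obtain ⟨gk, hgk⟩ := isSchwartz_contr hSk (fun _ => ω)
    have h1 := hasDerivAt_hypInt ω hω gk 0 ω p
    have hzero : (fun s : ℝ => ∫ y : ((ℝ ∙ ω)ᗮ : Submodule ℝ (E n)),
        gk ((0:E n) + s • ω + (y : E n))) = fun _ => (0:ℝ) := by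
      funext s
      have e1 : (fun y : ((ℝ ∙ ω)ᗮ : Submodule ℝ (E n)) => gk ((0:E n) + s • ω + (y : E n)))
          = fun y : ((ℝ ∙ ω)ᗮ : Submodule ℝ (E n)) =>
              contr (dIter k u) (fun _ => ω) (s • ω + (y : E n)) := by
        funext y
        rw [zero_add, ← congrFun hgk _]
      rw [e1]
      exact ih s
    rw [hzero] at h1
    have h2 := h1.unique (hasDerivAt_const p 0)
    rw [hypInt_def]
    have e2 : (fun y : ((ℝ ∙ ω)ᗮ : Submodule ℝ (E n)) =>
        contr (dIter (k+1) u) (fun _ => ω) (p • ω + (y : E n)))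
        = fun y : ((ℝ ∙ ω)ᗮ : Submodule ℝ (E n)) =>
            (SchwartzMap.pderivCLM ℝ ω gk) ((0:E n) + p • ω + (y : E n)) := by
      funext y
      have h3 : contr (dIter (k+1) u) (fun _ => ω) (p • ω + (y : E n))
          = fderiv ℝ (contr (dIter k u) (fun _ => ω)) (p • ω + (y : E n)) ω :=
        contr_dsym (dIter k u) hSk ω _
      rw [h3, hgk, SchwartzMap.pderivCLM_apply, zero_add]
    rw [e2]
    exact h2

lemma contr_cast {n : ℕ} (ω : E n) {M m : ℕ} (h : M = m) (g : TF n M) (x : E n) :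
    (∑ idx : Fin m → Fin n, g x (fun j => idx (Fin.cast h j)) * ∏ j, ω (idx j))
      = contr g (fun _ => ω) x := by
  subst h
  rfl

/-- If `f = ∑_{i=0}^{m-1} dⁱ vᵢ` with each `vᵢ` a Schwartz solenoidal symmetric
`(m-i)`-tensor field, then the transversal Radon transform of `f` vanishes. -/
theorem stmt13 {n m : ℕ} (v : (i : Fin m) → TF n (m - (i : ℕ)))
    (hS : ∀ i, IsSchwartzTF (v i)) (hsym : ∀ i, IsSymTF (v i))
    (hsol : ∀ i, div' (v i) = fun _ _ => 0)
    (f : TF n m)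
    (hf : ∀ x idx, f x idx
      = ∑ i : Fin m, dIter (i : ℕ) (v i) x
          (fun j => idx (Fin.cast (by have := i.isLt; omega : m - (i : ℕ) + (i : ℕ) = m) j)))
    (ω : E n) (hω : ‖ω‖ = 1) (p : ℝ) :
    TRT f ω p = 0 := by
  have hsum : ∀ x : E n, contr f (fun _ => ω) x
      = ∑ i : Fin m, contr (dIter (i : ℕ) (v i)) (fun _ => ω) x := by
    intro x
    have h0 : contr f (fun _ => ω) x = ∑ idx : Fin m → Fin n, f x idx * ∏ j, ω (idx j) := rfl
    rw [h0, Finset.sum_congr rfl fun idx _ => by rw [hf x idx, Finset.sum_mul], Finset.sum_comm]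
    exact Finset.sum_congr rfl fun i _ => contr_cast ω _ (dIter (i : ℕ) (v i)) x
  have hint : ∀ i : Fin m, Integrable (fun y : ((ℝ ∙ ω)ᗮ : Submodule ℝ (E n)) =>
      contr (dIter (i : ℕ) (v i)) (fun _ => ω) (p • ω + (y : E n))) := by
    intro i
    obtain ⟨g, hg⟩ := isSchwartz_contr (isSchwartz_dIter (v i) (hS i) (i : ℕ)) (fun _ => ω)
    have e : (fun y : ((ℝ ∙ ω)ᗮ : Submodule ℝ (E n)) =>
        contr (dIter (i : ℕ) (v i)) (fun _ => ω) (p • ω + (y : E n)))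
        = fun y : ((ℝ ∙ ω)ᗮ : Submodule ℝ (E n)) => g (p • ω + (y : E n)) :=
      funext fun y => congrFun hg _
    rw [e]
    exact integrable_comp ω hω g (p • ω)
  show hypInt (contr f (fun _ => ω)) ω p = 0
  rw [hypInt_def]
  have e : (fun y : ((ℝ ∙ ω)ᗮ : Submodule ℝ (E n)) => contr f (fun _ => ω) (p • ω + (y : E n)))
      = fun y : ((ℝ ∙ ω)ᗮ : Submodule ℝ (E n)) =>
          ∑ i : Fin m, contr (dIter (i : ℕ) (v i)) (fun _ => ω) (p • ω + (y : E n)) :=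
    funext fun y => hsum _
  rw [e, integral_finset_sum _ (fun i _ => hint i)]
  refine Finset.sum_eq_zero fun i _ => ?_
  have hz := main_zero ω hω (m - (i : ℕ)) (by have := i.isLt; omega) (v i) (hS i) (hsol i)
    (i : ℕ) p
  rw [hypInt_def] at hz
  exact hz

end Helpers

end
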